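/- Let y₀, y₁, y_d be real numbers with y₀ ≠ y_d and y₁ ≠ y_d. Let a₀, b₀, p₀ be points of ℝ² with second coordinate y₀ and a₀ ≠ b₀; let a₁, b₁, p₁ be points with second coordinate y₁ and a₁ ≠ b₁; let d₀, d₁ be points with second coordinate y_d. Let f₀, f₁, q be points of ℝ² such that: f₀, f₁, d₀ are NOT collinear; f₀, f₁, d₁ are NOT collinear; a₀, d₀, f₁ are collinear; b₀, d₀, f₀ are collinear; a₁, d₁, f₁ are collinear; b₁, d₁, f₀ are collinear; f₀, f₁, q are collinear; p₀, d₀, q are collinear; and q, d₁, p₁ are collinear. Then (x(p₀) - x(a₀))·(x(b₁) - x(a₁)) = (x(p₁) - x(a₁))·(x(b₀) - x(a₀)), i.e. p₀ divides the segment a₀b₀ in the same ratio as p₁ divides a₁b₁. -/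

import Mathlib

lemma collinear_iff_det (p q r : ℝ × ℝ) :
    Collinear ℝ ({p, q, r} : Set (ℝ × ℝ)) ↔
      (q.1 - p.1) * (r.2 - p.2) = (r.1 - p.1) * (q.2 - p.2) := by
  rw [collinear_iff_of_mem (Set.mem_insert p {q, r})]
  constructor
  · rintro ⟨v, hv⟩
    obtain ⟨rq, hq⟩ := hv q (by simp)
    obtain ⟨rr, hr⟩ := hv r (by simp)
    have hq1 : q.1 = rq * v.1 + p.1 := by rw [hq]; simp
    have hq2 : q.2 = rq * v.2 + p.2 := by rw [hq]; simp
    have hr1 : r.1 = rr * v.1 + p.1 := by rw [hr]; simp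
    have hr2 : r.2 = rr * v.2 + p.2 := by rw [hr]; simp
    rw [hq1, hq2, hr1, hr2]; ring
  · intro h
    by_cases hq : q.1 = p.1 ∧ q.2 = p.2
    · refine ⟨r - p, ?_⟩
      rintro x (rfl | rfl | rfl)
      · exact ⟨0, by simp⟩
      · exact ⟨0, by simp [Prod.ext_iff, hq.1, hq.2]⟩
      · exact ⟨1, by simp⟩
    · refine ⟨q - p, ?_⟩
      rintro x (rfl | rfl | rfl)
      · exact ⟨0, by simp⟩
      · exact ⟨1, by simp⟩
      · rcases not_and_or.1 hq with h1 | h1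
        · refine ⟨(x.1 - p.1) / (q.1 - p.1), ?_⟩
          have h1' : q.1 - p.1 ≠ 0 := sub_ne_zero.2 h1
          apply Prod.ext
          · simp; field_simp; ring
          · simp; field_simp; linear_combination h
        · refine ⟨(x.2 - p.2) / (q.2 - p.2), ?_⟩
          have h1' : q.2 - p.2 ≠ 0 := sub_ne_zero.2 h1
          apply Prod.ext
          · simp; field_simp; linear_combination -h
          · simp; field_simp; ring

/-- The copy lemma (Lemma 3.3 / lemma:copyLemma): `a₀, b₀, p₀` lie on the horizontal line
`y = y₀`, `a₁, b₁, p₁` on the line `y = y₁`, and the two pivots `d₀, d₁` both lie on the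
line `y = y_d` with `y₀ ≠ y_d ≠ y₁`.  If `f₀, f₁` span a line avoiding the pivots, the
endpoint correspondences `a₀ ↦ f₁ ↦ a₁` and `b₀ ↦ f₀ ↦ b₁` hold via the pivots, and `q` is
the image of `p₀` on the line `f₀f₁` under projection from `d₀` while `p₁` is the image of
`q` under projection from `d₁`, then `p₀` divides `a₀b₀` in the same ratio as `p₁` divides
`a₁b₁`: `(x(p₀) - x(a₀))·(x(b₁) - x(a₁)) = (x(p₁) - x(a₁))·(x(b₀) - x(a₀))`. -/
theorem copy_lemma (y0 y1 yd : ℝ) (hy0 : y0 ≠ yd) (hy1 : y1 ≠ yd)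
    (a0 b0 p0 a1 b1 p1 d0 d1 f0 f1 q : ℝ × ℝ)
    (ha0 : a0.2 = y0) (hb0 : b0.2 = y0) (hp0 : p0.2 = y0) (hab0 : a0 ≠ b0)
    (ha1 : a1.2 = y1) (hb1 : b1.2 = y1) (hp1 : p1.2 = y1) (hab1 : a1 ≠ b1)
    (hd0 : d0.2 = yd) (hd1 : d1.2 = yd)
    (hnc0 : ¬ Collinear ℝ {f0, f1, d0}) (hnc1 : ¬ Collinear ℝ {f0, f1, d1})
    (hc1 : Collinear ℝ {a0, d0, f1}) (hc2 : Collinear ℝ {b0, d0, f0})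
    (hc3 : Collinear ℝ {a1, d1, f1}) (hc4 : Collinear ℝ {b1, d1, f0})
    (hc5 : Collinear ℝ {f0, f1, q}) (hc6 : Collinear ℝ {p0, d0, q})
    (hc7 : Collinear ℝ {q, d1, p1}) :
    (p0.1 - a0.1) * (b1.1 - a1.1) = (p1.1 - a1.1) * (b0.1 - a0.1) := by
  have e1 := (collinear_iff_det a0 d0 f1).1 hc1
  have e2 := (collinear_iff_det b0 d0 f0).1 hc2
  have e3 := (collinear_iff_det a1 d1 f1).1 hc3
  have e4 := (collinear_iff_det b1 d1 f0).1 hc4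
  have e5 := (collinear_iff_det f0 f1 q).1 hc5
  have e6 := (collinear_iff_det p0 d0 q).1 hc6
  have e7 := (collinear_iff_det q d1 p1).1 hc7
  rw [ha0, hd0] at e1
  rw [hb0, hd0] at e2
  rw [ha1, hd1] at e3
  rw [hb1, hd1] at e4
  rw [hp0, hd0] at e6
  rw [hp1, hd1] at e7
  have hyd0 : yd - y0 ≠ 0 := sub_ne_zero.2 (Ne.symm hy0)
  have hyd1 : yd - y1 ≠ 0 := sub_ne_zero.2 (Ne.symm hy1)
  -- f1 is not at pivot height
  have hv1 : f1.2 ≠ yd := by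
    intro h
    have hx : d0.1 = f1.1 := by
      rw [h] at e1
      have := mul_right_cancel₀ hyd0 e1
      linarith
    exact hnc0 ((collinear_iff_det f0 f1 d0).2 (by rw [hd0, h, hx]))
  -- f0 is not at pivot height
  have hv0 : f0.2 ≠ yd := by
    intro h
    have hx : d0.1 = f0.1 := by
      rw [h] at e2
      have := mul_right_cancel₀ hyd0 e2
      linarith
    exact hnc0 ((collinear_iff_det f0 f1 d0).2 (by rw [hd0, h, hx]; ring))
  -- q is not at pivot height
  have hqy : q.2 ≠ yd := by
    intro h
    have hx : d0.1 = q.1 := by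
      rw [h] at e6
      have := mul_right_cancel₀ hyd0 e6
      linarith
    refine hnc0 ((collinear_iff_det f0 f1 d0).2 ?_)
    rw [hd0, hx, ← h]
    exact e5
  have hqd : yd - q.2 ≠ 0 := sub_ne_zero.2 (Ne.symm hqy)
  have hv1d : yd - f1.2 ≠ 0 := sub_ne_zero.2 (Ne.symm hv1)
  have hv0d : yd - f0.2 ≠ 0 := sub_ne_zero.2 (Ne.symm hv0)
  have hP0 : (yd - q.2) * (yd - f1.2) * (p0.1 - a0.1) =
      (yd - y0) * (yd * (q.1 - f1.1) - (q.1 * f1.2 - f1.1 * q.2) - d0.1 * (q.2 - f1.2)) := by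
    linear_combination (yd - f1.2) * e6 - (yd - q.2) * e1
  have hB0 : (yd - f0.2) * (yd - f1.2) * (b0.1 - a0.1) =
      (yd - y0) * (yd * (f0.1 - f1.1) - (f0.1 * f1.2 - f1.1 * f0.2) - d0.1 * (f0.2 - f1.2)) := by
    linear_combination (yd - f1.2) * e2 - (yd - f0.2) * e1
  have hP1 : (yd - q.2) * (yd - f1.2) * (p1.1 - a1.1) =
      (yd - y1) * (yd * (q.1 - f1.1) - (q.1 * f1.2 - f1.1 * q.2) - d1.1 * (q.2 - f1.2)) := by
    linear_combination (-(yd - f1.2)) * e7 - (yd - q.2) * e3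
  have hB1 : (yd - f0.2) * (yd - f1.2) * (b1.1 - a1.1) =
      (yd - y1) * (yd * (f0.1 - f1.1) - (f0.1 * f1.2 - f1.1 * f0.2) - d1.1 * (f0.2 - f1.2)) := by
    linear_combination (yd - f1.2) * e4 - (yd - f0.2) * e3
  have key : (yd * (q.1 - f1.1) - (q.1 * f1.2 - f1.1 * q.2) - d0.1 * (q.2 - f1.2)) *
        (yd * (f0.1 - f1.1) - (f0.1 * f1.2 - f1.1 * f0.2) - d1.1 * (f0.2 - f1.2)) =
      (yd * (q.1 - f1.1) - (q.1 * f1.2 - f1.1 * q.2) - d1.1 * (q.2 - f1.2)) *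
        (yd * (f0.1 - f1.1) - (f0.1 * f1.2 - f1.1 * f0.2) - d0.1 * (f0.2 - f1.2)) := by
    linear_combination (d0.1 - d1.1) * (yd - f1.2) * e5
  have hne : (yd - q.2) * (yd - f1.2) * ((yd - f0.2) * (yd - f1.2)) ≠ 0 :=
    mul_ne_zero (mul_ne_zero hqd hv1d) (mul_ne_zero hv0d hv1d)
  refine mul_left_cancel₀ hne ?_
  linear_combination hP0 * ((yd - f0.2) * (yd - f1.2) * (b1.1 - a1.1)) +
    ((yd - y0) * (yd * (q.1 - f1.1) - (q.1 * f1.2 - f1.1 * q.2) - d0.1 * (q.2 - f1.2))) * hB1 -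
    hP1 * ((yd - f0.2) * (yd - f1.2) * (b0.1 - a0.1)) -
    ((yd - y1) * (yd * (q.1 - f1.1) - (q.1 * f1.2 - f1.1 * q.2) - d1.1 * (q.2 - f1.2))) * hB0 +
    ((yd - y0) * (yd - y1)) * key
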